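/- Let t ∈ C with |t| ≤ 1, λ ∈ [0,1), and 0 < γ ≤ β < 1. Then |γt(1-λ)/(1-γλt)|² ≤ (γ²(1+βλ)²)/(β²(1+γλ)²) · |βt(1-λ)/(1-βλt)|², i.e., the ratio |l^γ|²/|l^β|² of the eigenvalues l^γ = γt(1-λ)/(1-γλt) and l^β = βt(1-λ)/(1-βλt) is at most γ²(1+βλ)²/(β²(1+γλ)²). -/

import Mathlib

theorem stmt_16 (t : ℂ) (ht : ‖t‖ ≤ 1)
    (lam : ℝ) (hlam : lam ∈ Set.Ico (0 : ℝ) 1)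
    (γ β : ℝ) (hγ : 0 < γ) (hγβ : γ ≤ β) (hβ : β < 1) :
    ‖(γ : ℂ) * t * (1 - (lam : ℂ)) / (1 - (γ : ℂ) * (lam : ℂ) * t)‖ ^ 2 ≤
      (γ ^ 2 * (1 + β * lam) ^ 2) / (β ^ 2 * (1 + γ * lam) ^ 2) *
        ‖(β : ℂ) * t * (1 - (lam : ℂ)) / (1 - (β : ℂ) * (lam : ℂ) * t)‖ ^ 2 := by
  obtain ⟨hlam0, hlam1⟩ := hlam
  set x := t.re with hxdef
  set y := t.im with hydef
  set s := x ^ 2 + y ^ 2 with hsdef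
  have hβ0 : 0 < β := lt_of_lt_of_le hγ hγβ
  have hst : ‖t‖ ^ 2 = s := by
    rw [Complex.sq_norm, Complex.normSq_apply]; ring
  have hs1 : s ≤ 1 := by
    rw [← hst]; nlinarith [norm_nonneg t]
  have hs0 : 0 ≤ s := by positivity
  have hx2 : x ^ 2 ≤ s := by nlinarith [sq_nonneg y]
  have hx1 : -1 ≤ x := by nlinarith
  have hx1' : x ≤ 1 := by nlinarith
  -- numerators
  have hone : (1 : ℂ) - (lam : ℂ) = ((1 - lam : ℝ) : ℂ) := by push_cast; ring
  have hnum : ∀ c : ℝ, 0 < c → ‖(c : ℂ) * t * (1 - (lam : ℂ))‖ ^ 2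
      = c ^ 2 * s * (1 - lam) ^ 2 := by
    intro c hc
    rw [hone, norm_mul, norm_mul, Complex.norm_real, Complex.norm_real,
      Real.norm_eq_abs, Real.norm_eq_abs, abs_of_pos hc,
      abs_of_nonneg (by linarith : (0:ℝ) ≤ 1 - lam)]
    rw [mul_pow, mul_pow, hst]
  -- denominators
  have hden : ∀ c : ℝ, ‖1 - (c : ℂ) * (lam : ℂ) * t‖ ^ 2
      = 1 - 2 * (c * lam) * x + (c * lam) ^ 2 * s := by
    intro c
    rw [Complex.sq_norm, Complex.normSq_apply]
    simp [Complex.sub_re, Complex.sub_im, Complex.mul_re, Complex.mul_im, ← hxdef, ← hydef]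
    ring
  have hdpos : ∀ c : ℝ, 0 ≤ c → c < 1 → 0 < 1 - 2 * (c * lam) * x + (c * lam) ^ 2 * s := by
    intro c hc0 hc1
    have hcl : c * lam < 1 := by nlinarith
    have hcl0 : 0 ≤ c * lam := by positivity
    have hclx : 0 < 1 - c * lam * x := by
      nlinarith [mul_nonneg hcl0 (by linarith : (0:ℝ) ≤ 1 - x)]
    nlinarith [mul_pos hclx hclx, mul_nonneg (mul_nonneg hcl0 hcl0) (sub_nonneg.2 hx2)]
  have hγ1 : γ < 1 := lt_of_le_of_lt hγβ hβ
  have hbγ : 0 < 1 - 2 * (γ * lam) * x + (γ * lam) ^ 2 * s := hdpos γ hγ.le hγ1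
  have hbβ : 0 < 1 - 2 * (β * lam) * x + (β * lam) ^ 2 * s := hdpos β hβ0.le hβ
  rw [norm_div, norm_div, div_pow, div_pow, hnum γ hγ, hnum β hβ0, hden γ, hden β,
    div_mul_div_comm]
  rw [div_le_div_iff₀ hbγ (by positivity)]
  -- key nonnegativity
  have key : 0 ≤ γ ^ 2 * β ^ 2 * (1 - lam) ^ 2 * s *
      ((β - γ) * lam * ((1 - s) * (γ * lam + β * lam + 2 * γ * β * lam ^ 2)
        + 2 * (1 + x) * (1 - γ * β * lam ^ 2))) := by
    have hl2 : lam ^ 2 ≤ 1 := by nlinarith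
    have hgb : γ * β * lam ^ 2 < 1 := by
      nlinarith [mul_nonneg hγ.le hβ0.le, mul_nonneg (mul_nonneg hγ.le hβ0.le) (sq_nonneg lam)]
    apply mul_nonneg (by positivity)
    apply mul_nonneg (mul_nonneg (by linarith) hlam0)
    apply add_nonneg
    · exact mul_nonneg (by linarith) (by positivity)
    · exact mul_nonneg (by linarith) (by linarith)
  linarith [key]
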